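/- arXiv:math-ph/0601006 — 2 statements merged into one kernel-verified Lean document; each statement's English description precedes it below -/
import Mathlib

section
/- Let Ω, ∂Ω, σ, n be as in the context, and assume in addition that Ω is contained in the closed ball of radius R > 0 centered at the origin. Let φ, ψ : ℝ^d → ℝ be C² on a neighborhood of the closure of Ω, satisfying −Δφ = E_φ·φ and −Δψ = E_ψ·ψ on Ω, with ∫_Ω φ(x)² dx = 1, ∫_Ω ψ(x)² dx = 1 and ∫_Ω φ(x)·ψ(x) dx = 0, and both satisfying Dirichlet boundary conditions: φ = ψ = 0 on ∂Ω with normal gradients there, i.e. ∇φ(x) = ⟨n(x),∇φ(x)⟩·n(x) and ∇ψ(x) = ⟨n(x),∇ψ(x)⟩·n(x) for all x ∈ ∂Ω. Then |∫_{∂Ω} ⟨x,n(x)⟩·⟨n(x),∇φ(x)⟩·⟨n(x),∇ψ(x)⟩ dσ(x)| ≤ (R²/4)·(E_φ − E_ψ)². -/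
open MeasureTheory
open scoped RealInnerProductSpace Classical

noncomputable section

/-- The Euclidean Laplacian: the sum of the second partial derivatives. -/
def lap {d : ℕ} (u : EuclideanSpace ℝ (Fin d) → ℝ) (x : EuclideanSpace ℝ (Fin d)) : ℝ :=
  ∑ i, fderiv ℝ (fun y => fderiv ℝ u y (EuclideanSpace.single i (1:ℝ))) x
    (EuclideanSpace.single i (1:ℝ))

/-- The divergence: the sum of the partial derivatives of the components. -/
def divg {d : ℕ} (F : EuclideanSpace ℝ (Fin d) → EuclideanSpace ℝ (Fin d))
    (x : EuclideanSpace ℝ (Fin d)) : ℝ :=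
  ∑ i, fderiv ℝ (fun y => ⟪F y, EuclideanSpace.single i (1:ℝ)⟫) x
    (EuclideanSpace.single i (1:ℝ))

namespace DQOB
open InnerProductSpace
variable {d : ℕ}
local notation "E" => EuclideanSpace ℝ (Fin d)
local notation "sgl" i => (EuclideanSpace.single i (1:ℝ) : EuclideanSpace ℝ (Fin d))

/-- the inverse of `toDual`, as a real continuous linear equiv. -/
def TD (d : ℕ) : StrongDual ℝ (EuclideanSpace ℝ (Fin d)) ≃L[ℝ] EuclideanSpace ℝ (Fin d) :=
  (toDual ℝ (EuclideanSpace ℝ (Fin d))).symm.toContinuousLinearEquiv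

lemma TD_inner (ℓ : StrongDual ℝ (EuclideanSpace ℝ (Fin d))) (w : E) :
    ⟪TD d ℓ, w⟫ = ℓ w := toDual_symm_apply

lemma TD_inner' (ℓ : StrongDual ℝ (EuclideanSpace ℝ (Fin d))) (w : E) :
    ⟪w, TD d ℓ⟫ = ℓ w := by rw [real_inner_comm]; exact toDual_symm_apply

lemma TDL_inner (ℓ : StrongDual ℝ (EuclideanSpace ℝ (Fin d))) (w : E) :
    ⟪((TD d).toContinuousLinearMap : StrongDual ℝ (EuclideanSpace ℝ (Fin d)) →L[ℝ] E) ℓ, w⟫ = ℓ w :=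
  toDual_symm_apply

lemma TDL_inner' (ℓ : StrongDual ℝ (EuclideanSpace ℝ (Fin d))) (w : E) :
    ⟪w, ((TD d).toContinuousLinearMap : StrongDual ℝ (EuclideanSpace ℝ (Fin d)) →L[ℝ] E) ℓ⟫ = ℓ w := by
  rw [real_inner_comm]; exact toDual_symm_apply

lemma gradient_eq (φ : E → ℝ) (y : E) : gradient φ y = TD d (fderiv ℝ φ y) := rfl

lemma inner_gradient (φ : E → ℝ) (y v : E) : ⟪gradient φ y, v⟫ = fderiv ℝ φ y v :=
  toDual_symm_apply

lemma sum_inner_smul (v : E) : ∑ i, ⟪v, sgl i⟫ • (sgl i) = v := by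
  have h := (EuclideanSpace.basisFun (Fin d) ℝ).sum_repr' v
  simp only [EuclideanSpace.basisFun_apply] at h
  simpa [real_inner_comm] using h

lemma divg_hasFDerivAt {F : E → E} {F' : E →L[ℝ] E} {x : E} (h : HasFDerivAt F F' x) :
    divg F x = ∑ i, ⟪F' (sgl i), sgl i⟫ := by
  unfold divg
  refine Finset.sum_congr rfl fun i _ => ?_
  have h1 : HasFDerivAt (fun y => ⟪F y, sgl i⟫)
      ((fderivInnerCLM ℝ (F x, sgl i)).comp (F'.prod (0 : E →L[ℝ] E))) x :=
    h.inner ℝ (hasFDerivAt_const _ _)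
  rw [h1.fderiv]
  simp [fderivInnerCLM_apply]

lemma divg_add {F H : E → E} {x : E} (hF : DifferentiableAt ℝ F x)
    (hH : DifferentiableAt ℝ H x) :
    divg (fun y => F y + H y) x = divg F x + divg H x := by
  show divg (F + H) x = _
  rw [divg_hasFDerivAt (hF.hasFDerivAt.add hH.hasFDerivAt),
    divg_hasFDerivAt hF.hasFDerivAt, divg_hasFDerivAt hH.hasFDerivAt,
    ← Finset.sum_add_distrib]
  simp [inner_add_left]

lemma divg_sub {F H : E → E} {x : E} (hF : DifferentiableAt ℝ F x)
    (hH : DifferentiableAt ℝ H x) :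
    divg (fun y => F y - H y) x = divg F x - divg H x := by
  show divg (F - H) x = _
  rw [divg_hasFDerivAt (hF.hasFDerivAt.sub hH.hasFDerivAt),
    divg_hasFDerivAt hF.hasFDerivAt, divg_hasFDerivAt hH.hasFDerivAt,
    ← Finset.sum_sub_distrib]
  simp [inner_sub_left]

lemma divg_smul {f : E → ℝ} {V : E → E} {f' : E →L[ℝ] ℝ} {V' : E →L[ℝ] E} {x : E}
    (hf : HasFDerivAt f f' x) (hV : HasFDerivAt V V' x) :
    divg (fun y => f y • V y) x = f x * (∑ i, ⟪V' (sgl i), sgl i⟫) + f' (V x) := by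
  show divg (f • V) x = _
  rw [divg_hasFDerivAt (hf.smul hV)]
  simp only [ContinuousLinearMap.add_apply, ContinuousLinearMap.coe_smul', Pi.smul_apply,
    ContinuousLinearMap.smulRight_apply, inner_add_left, real_inner_smul_left]
  rw [Finset.sum_add_distrib, Finset.mul_sum]
  have h2 : ∑ i, f' (sgl i) * ⟪V x, sgl i⟫ = f' (V x) := by
    conv_rhs => rw [← sum_inner_smul (V x)]
    rw [map_sum]
    exact Finset.sum_congr rfl fun i _ => by rw [_root_.map_smul]; simp [mul_comm]
  rw [h2]

lemma hasFDerivAt_gradient {φ : E → ℝ} {x : E} {A : E →L[ℝ] E →L[ℝ] ℝ}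
    (hA : HasFDerivAt (fderiv ℝ φ) A x) :
    HasFDerivAt (gradient φ) ((TD d).toContinuousLinearMap.comp A) x := by
  exact (((TD d).toContinuousLinearMap).hasFDerivAt).comp x hA

lemma inner_TDcompA {A : E →L[ℝ] E →L[ℝ] ℝ} (v w : E) :
    ⟪((TD d).toContinuousLinearMap.comp A) v, w⟫ = A v w := toDual_symm_apply

lemma lap_eq {φ : E → ℝ} {x : E} {A : E →L[ℝ] E →L[ℝ] ℝ}
    (hA : HasFDerivAt (fderiv ℝ φ) A x) :
    lap φ x = ∑ i, A (sgl i) (sgl i) := by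
  unfold lap
  refine Finset.sum_congr rfl fun i _ => ?_
  have h1 : HasFDerivAt (fun y => fderiv ℝ φ y (sgl i))
      ((ContinuousLinearMap.apply ℝ ℝ (sgl i)).comp A) x :=
    ((ContinuousLinearMap.apply ℝ ℝ (sgl i)).hasFDerivAt).comp x hA
  rw [h1.fderiv]
  rfl

lemma trace_grad {φ : E → ℝ} {x : E} {A : E →L[ℝ] E →L[ℝ] ℝ}
    (hA : HasFDerivAt (fderiv ℝ φ) A x) :
    ∑ i, ⟪((TD d).toContinuousLinearMap.comp A) (sgl i), sgl i⟫ = lap φ x := by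
  rw [lap_eq hA]
  exact Finset.sum_congr rfl fun i _ => inner_TDcompA _ _

lemma trace_id : ∑ i : Fin d, ⟪(ContinuousLinearMap.id ℝ E) (sgl i), sgl i⟫ = (d : ℝ) := by
  simp [EuclideanSpace.inner_single_left]


lemma inner_TDcompA' {A : E →L[ℝ] E →L[ℝ] ℝ} (v w : E) :
    ⟪w, (((TD d).toContinuousLinearMap).comp A) v⟫ = A v w := by
  rw [real_inner_comm]; exact toDual_symm_apply

lemma fderiv_apply_eq (φ : E → ℝ) (y v : E) : fderiv ℝ φ y v = ⟪gradient φ y, v⟫ :=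
  (inner_gradient φ y v).symm

lemma divG_eq (U : Set E) (hU : IsOpen U) (φ ψ : E → ℝ)
    (hφ : ContDiffOn ℝ 2 φ U) (hψ : ContDiffOn ℝ 2 ψ U) (c4 c5 c6 : ℝ)
    (x : E) (hx : x ∈ U) :
    divg (fun y => ⟪y, gradient φ y⟫ • gradient ψ y + ⟪y, gradient ψ y⟫ • gradient φ y
      - ⟪gradient φ y, gradient ψ y⟫ • y
      + (c4 * ψ y) • gradient φ y + (c4 * φ y) • gradient ψ y + (c5 * (φ y * ψ y)) • y
      + (-(c6 * (⟪y, y⟫ * ψ y))) • gradient φ y + (c6 * (⟪y, y⟫ * φ y)) • gradient ψ y) x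
    = ⟪x, gradient φ x⟫ * lap ψ x + ⟪x, gradient ψ x⟫ * lap φ x
      + (2 + 2*c4 - (d:ℝ)) * ⟪gradient φ x, gradient ψ x⟫
      + c4 * (ψ x * lap φ x + φ x * lap ψ x)
      + c5 * ((d:ℝ) * (φ x * ψ x) + φ x * ⟪x, gradient ψ x⟫ + ψ x * ⟪x, gradient φ x⟫)
      + c6 * (⟪x,x⟫ * (φ x * lap ψ x - ψ x * lap φ x)
          + 2 * (φ x * ⟪x, gradient ψ x⟫ - ψ x * ⟪x, gradient φ x⟫)) := by
  have hUx : U ∈ nhds x := hU.mem_nhds hx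
  have hφ1 : DifferentiableOn ℝ φ U := hφ.differentiableOn (by norm_num)
  have hψ1 : DifferentiableOn ℝ ψ U := hψ.differentiableOn (by norm_num)
  have hφd : HasFDerivAt φ (fderiv ℝ φ x) x :=
    (hφ1.differentiableAt hUx).hasFDerivAt
  have hψd : HasFDerivAt ψ (fderiv ℝ ψ x) x :=
    (hψ1.differentiableAt hUx).hasFDerivAt
  set Aφ := fderiv ℝ (fderiv ℝ φ) x with hAφdef
  set Aψ := fderiv ℝ (fderiv ℝ ψ) x with hAψdef
  have hAφ : HasFDerivAt (fderiv ℝ φ) Aφ x :=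
    ((((hφ.fderiv_of_isOpen hU (m := 1) (by norm_num)).differentiableOn
      (by norm_num)).differentiableAt hUx)).hasFDerivAt
  have hAψ : HasFDerivAt (fderiv ℝ ψ) Aψ x :=
    ((((hψ.fderiv_of_isOpen hU (m := 1) (by norm_num)).differentiableOn
      (by norm_num)).differentiableAt hUx)).hasFDerivAt
  have hgφ : HasFDerivAt (gradient φ) (((TD d).toContinuousLinearMap).comp Aφ) x :=
    hasFDerivAt_gradient hAφ
  have hgψ : HasFDerivAt (gradient ψ) (((TD d).toContinuousLinearMap).comp Aψ) x :=
    hasFDerivAt_gradient hAψ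
  have hsymφ : ∀ v w, Aφ v w = Aφ w v := fun v w =>
    second_derivative_symmetric_of_eventually
      (Filter.eventually_of_mem hUx fun y hy =>
        (hφ1.differentiableAt (hU.mem_nhds hy)).hasFDerivAt) hAφ v w
  have hsymψ : ∀ v w, Aψ v w = Aψ w v := fun v w =>
    second_derivative_symmetric_of_eventually
      (Filter.eventually_of_mem hUx fun y hy =>
        (hψ1.differentiableAt (hU.mem_nhds hy)).hasFDerivAt) hAψ v w
  have hid : HasFDerivAt (fun y : E => y) (ContinuousLinearMap.id ℝ _) x := hasFDerivAt_id x
  -- scalar derivatives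
  have hf1 : HasFDerivAt (fun y : E => ⟪y, gradient φ y⟫)
      ((fderivInnerCLM ℝ (x, gradient φ x)).comp
        ((ContinuousLinearMap.id ℝ _).prod (((TD d).toContinuousLinearMap).comp Aφ))) x := by
    exact (hasFDerivAt_id x).inner ℝ hgφ
  have hf2 : HasFDerivAt (fun y : E => ⟪y, gradient ψ y⟫)
      ((fderivInnerCLM ℝ (x, gradient ψ x)).comp
        ((ContinuousLinearMap.id ℝ _).prod (((TD d).toContinuousLinearMap).comp Aψ))) x := by
    exact (hasFDerivAt_id x).inner ℝ hgψ
  have hf3 : HasFDerivAt (fun y : E => ⟪gradient φ y, gradient ψ y⟫)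
      ((fderivInnerCLM ℝ (gradient φ x, gradient ψ x)).comp
        ((((TD d).toContinuousLinearMap).comp Aφ).prod
          (((TD d).toContinuousLinearMap).comp Aψ))) x := hgφ.inner ℝ hgψ
  have hf4 : HasFDerivAt (fun y => c4 * ψ y) (c4 • fderiv ℝ ψ x) x := hψd.const_mul c4
  have hf5 : HasFDerivAt (fun y => c4 * φ y) (c4 • fderiv ℝ φ x) x := hφd.const_mul c4
  have hf6 : HasFDerivAt (fun y => c5 * (φ y * ψ y))
      (c5 • (φ x • fderiv ℝ ψ x + ψ x • fderiv ℝ φ x)) x := (hφd.mul hψd).const_mul c5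
  have hxx : HasFDerivAt (fun y : E => ⟪y, y⟫)
      ((fderivInnerCLM ℝ (x, x)).comp
        ((ContinuousLinearMap.id ℝ _).prod (ContinuousLinearMap.id ℝ _))) x :=
    (hasFDerivAt_id x).inner ℝ (hasFDerivAt_id x)
  have hf7 : HasFDerivAt (fun y : E => -(c6 * (⟪y, y⟫ * ψ y)))
      (-(c6 • ((⟪x, x⟫ : ℝ) • fderiv ℝ ψ x + ψ x • ((fderivInnerCLM ℝ (x, x)).comp
        ((ContinuousLinearMap.id ℝ _).prod (ContinuousLinearMap.id ℝ _)))))) x :=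
    ((hxx.mul hψd).const_mul c6).neg
  have hf8 : HasFDerivAt (fun y : E => c6 * (⟪y, y⟫ * φ y))
      (c6 • ((⟪x, x⟫ : ℝ) • fderiv ℝ φ x + φ x • ((fderivInnerCLM ℝ (x, x)).comp
        ((ContinuousLinearMap.id ℝ _).prod (ContinuousLinearMap.id ℝ _))))) x :=
    (hxx.mul hφd).const_mul c6
  -- each term
  have ht1 : divg (fun y => ⟪y, gradient φ y⟫ • gradient ψ y) x
      = ⟪x, gradient φ x⟫ * lap ψ x
        + (Aφ (gradient ψ x) x + ⟪gradient ψ x, gradient φ x⟫) := by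
    have h := divg_smul hf1 hgψ
    rw [trace_grad hAψ] at h
    simp only [ContinuousLinearMap.comp_apply, ContinuousLinearMap.prod_apply,
      fderivInnerCLM_apply, ContinuousLinearMap.id_apply, inner_TDcompA, inner_TDcompA', TD_inner, TD_inner', TDL_inner, TDL_inner'] at h
    exact h
  have ht2 : divg (fun y => ⟪y, gradient ψ y⟫ • gradient φ y) x
      = ⟪x, gradient ψ x⟫ * lap φ x
        + (Aψ (gradient φ x) x + ⟪gradient φ x, gradient ψ x⟫) := by
    have h := divg_smul hf2 hgφ
    rw [trace_grad hAφ] at h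
    simp only [ContinuousLinearMap.comp_apply, ContinuousLinearMap.prod_apply,
      fderivInnerCLM_apply, ContinuousLinearMap.id_apply, inner_TDcompA, inner_TDcompA', TD_inner, TD_inner', TDL_inner, TDL_inner'] at h
    exact h
  have ht3 : divg (fun y => ⟪gradient φ y, gradient ψ y⟫ • y) x
      = ⟪gradient φ x, gradient ψ x⟫ * (d : ℝ)
        + (Aψ x (gradient φ x) + Aφ x (gradient ψ x)) := by
    have h := divg_smul hf3 hid
    rw [trace_id] at h
    simp only [ContinuousLinearMap.comp_apply, ContinuousLinearMap.prod_apply,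
      fderivInnerCLM_apply, ContinuousLinearMap.id_apply, inner_TDcompA, inner_TDcompA', TD_inner, TD_inner', TDL_inner, TDL_inner'] at h
    exact h
  have ht4 : divg (fun y => (c4 * ψ y) • gradient φ y) x
      = c4 * ψ x * lap φ x + c4 * ⟪gradient ψ x, gradient φ x⟫ := by
    have h := divg_smul hf4 hgφ
    rw [trace_grad hAφ] at h
    simp only [ContinuousLinearMap.coe_smul', Pi.smul_apply, smul_eq_mul,
      fderiv_apply_eq] at h
    rw [h]; try ring
  have ht5 : divg (fun y => (c4 * φ y) • gradient ψ y) x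
      = c4 * φ x * lap ψ x + c4 * ⟪gradient φ x, gradient ψ x⟫ := by
    have h := divg_smul hf5 hgψ
    rw [trace_grad hAψ] at h
    simp only [ContinuousLinearMap.coe_smul', Pi.smul_apply, smul_eq_mul,
      fderiv_apply_eq] at h
    rw [h]; try ring
  have ht6 : divg (fun y => (c5 * (φ y * ψ y)) • y) x
      = c5 * (φ x * ψ x) * (d : ℝ)
        + c5 * (φ x * ⟪gradient ψ x, x⟫ + ψ x * ⟪gradient φ x, x⟫) := by
    have h := divg_smul hf6 hid
    rw [trace_id] at h
    simp only [ContinuousLinearMap.coe_smul', Pi.smul_apply, smul_eq_mul,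
      ContinuousLinearMap.add_apply, fderiv_apply_eq] at h
    rw [h]; try ring
  have ht7 : divg (fun y => (-(c6 * (⟪y, y⟫ * ψ y))) • gradient φ y) x
      = -(c6 * (⟪x, x⟫ * ψ x)) * lap φ x
        - c6 * (⟪x, x⟫ * ⟪gradient ψ x, gradient φ x⟫
            + ψ x * (2 * ⟪x, gradient φ x⟫)) := by
    have h := divg_smul hf7 hgφ
    rw [trace_grad hAφ] at h
    simp only [ContinuousLinearMap.neg_apply, ContinuousLinearMap.coe_smul', Pi.smul_apply,
      smul_eq_mul, ContinuousLinearMap.add_apply, ContinuousLinearMap.comp_apply,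
      ContinuousLinearMap.prod_apply, fderivInnerCLM_apply, ContinuousLinearMap.id_apply,
      fderiv_apply_eq] at h
    rw [h, real_inner_comm (gradient φ x) x]; ring
  have ht8 : divg (fun y => (c6 * (⟪y, y⟫ * φ y)) • gradient ψ y) x
      = c6 * (⟪x, x⟫ * φ x) * lap ψ x
        + c6 * (⟪x, x⟫ * ⟪gradient φ x, gradient ψ x⟫
            + φ x * (2 * ⟪x, gradient ψ x⟫)) := by
    have h := divg_smul hf8 hgψ
    rw [trace_grad hAψ] at h
    simp only [ContinuousLinearMap.coe_smul', Pi.smul_apply,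
      smul_eq_mul, ContinuousLinearMap.add_apply, ContinuousLinearMap.comp_apply,
      ContinuousLinearMap.prod_apply, fderivInnerCLM_apply, ContinuousLinearMap.id_apply,
      fderiv_apply_eq] at h
    rw [h, real_inner_comm (gradient ψ x) x]; ring
  -- differentiability of partial sums
  have D1 : DifferentiableAt ℝ (fun y => ⟪y, gradient φ y⟫ • gradient ψ y) x :=
    (hf1.smul hgψ).differentiableAt
  have D2 : DifferentiableAt ℝ (fun y => ⟪y, gradient ψ y⟫ • gradient φ y) x :=
    (hf2.smul hgφ).differentiableAt
  have D3 : DifferentiableAt ℝ (fun y => ⟪gradient φ y, gradient ψ y⟫ • y) x :=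
    (hf3.smul hid).differentiableAt
  have D4 : DifferentiableAt ℝ (fun y => (c4 * ψ y) • gradient φ y) x :=
    (hf4.smul hgφ).differentiableAt
  have D5 : DifferentiableAt ℝ (fun y => (c4 * φ y) • gradient ψ y) x :=
    (hf5.smul hgψ).differentiableAt
  have D6 : DifferentiableAt ℝ (fun y => (c5 * (φ y * ψ y)) • y) x :=
    (hf6.smul hid).differentiableAt
  have D7 : DifferentiableAt ℝ (fun y => (-(c6 * (⟪y, y⟫ * ψ y))) • gradient φ y) x :=
    (hf7.smul hgφ).differentiableAt
  have D8 : DifferentiableAt ℝ (fun y => (c6 * (⟪y, y⟫ * φ y)) • gradient ψ y) x :=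
    (hf8.smul hgψ).differentiableAt
  calc divg (fun y => ⟪y, gradient φ y⟫ • gradient ψ y + ⟪y, gradient ψ y⟫ • gradient φ y
      - ⟪gradient φ y, gradient ψ y⟫ • y
      + (c4 * ψ y) • gradient φ y + (c4 * φ y) • gradient ψ y + (c5 * (φ y * ψ y)) • y
      + (-(c6 * (⟪y, y⟫ * ψ y))) • gradient φ y + (c6 * (⟪y, y⟫ * φ y)) • gradient ψ y) x
      = divg (fun y => ⟪y, gradient φ y⟫ • gradient ψ y + ⟪y, gradient ψ y⟫ • gradient φ y
          - ⟪gradient φ y, gradient ψ y⟫ • y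
          + (c4 * ψ y) • gradient φ y + (c4 * φ y) • gradient ψ y + (c5 * (φ y * ψ y)) • y
          + (-(c6 * (⟪y, y⟫ * ψ y))) • gradient φ y) x
        + divg (fun y => (c6 * (⟪y, y⟫ * φ y)) • gradient ψ y) x :=
      divg_add ((((((D1.add D2).sub D3).add D4).add D5).add D6).add D7) D8
    _ = divg (fun y => ⟪y, gradient φ y⟫ • gradient ψ y + ⟪y, gradient ψ y⟫ • gradient φ y
          - ⟪gradient φ y, gradient ψ y⟫ • y
          + (c4 * ψ y) • gradient φ y + (c4 * φ y) • gradient ψ y + (c5 * (φ y * ψ y)) • y) x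
        + divg (fun y => (-(c6 * (⟪y, y⟫ * ψ y))) • gradient φ y) x
        + divg (fun y => (c6 * (⟪y, y⟫ * φ y)) • gradient ψ y) x := by
      erw [divg_add (((((D1.add D2).sub D3).add D4).add D5).add D6) D7]; rfl
    _ = divg (fun y => ⟪y, gradient φ y⟫ • gradient ψ y + ⟪y, gradient ψ y⟫ • gradient φ y
          - ⟪gradient φ y, gradient ψ y⟫ • y
          + (c4 * ψ y) • gradient φ y + (c4 * φ y) • gradient ψ y) x
        + divg (fun y => (c5 * (φ y * ψ y)) • y) x
        + divg (fun y => (-(c6 * (⟪y, y⟫ * ψ y))) • gradient φ y) x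
        + divg (fun y => (c6 * (⟪y, y⟫ * φ y)) • gradient ψ y) x := by
      erw [divg_add ((((D1.add D2).sub D3).add D4).add D5) D6]; rfl
    _ = divg (fun y => ⟪y, gradient φ y⟫ • gradient ψ y + ⟪y, gradient ψ y⟫ • gradient φ y
          - ⟪gradient φ y, gradient ψ y⟫ • y
          + (c4 * ψ y) • gradient φ y) x
        + divg (fun y => (c4 * φ y) • gradient ψ y) x
        + divg (fun y => (c5 * (φ y * ψ y)) • y) x
        + divg (fun y => (-(c6 * (⟪y, y⟫ * ψ y))) • gradient φ y) x
        + divg (fun y => (c6 * (⟪y, y⟫ * φ y)) • gradient ψ y) x := by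
      erw [divg_add (((D1.add D2).sub D3).add D4) D5]; rfl
    _ = divg (fun y => ⟪y, gradient φ y⟫ • gradient ψ y + ⟪y, gradient ψ y⟫ • gradient φ y
          - ⟪gradient φ y, gradient ψ y⟫ • y) x
        + divg (fun y => (c4 * ψ y) • gradient φ y) x
        + divg (fun y => (c4 * φ y) • gradient ψ y) x
        + divg (fun y => (c5 * (φ y * ψ y)) • y) x
        + divg (fun y => (-(c6 * (⟪y, y⟫ * ψ y))) • gradient φ y) x
        + divg (fun y => (c6 * (⟪y, y⟫ * φ y)) • gradient ψ y) x := by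
      erw [divg_add ((D1.add D2).sub D3) D4]; rfl
    _ = divg (fun y => ⟪y, gradient φ y⟫ • gradient ψ y + ⟪y, gradient ψ y⟫ • gradient φ y) x
        - divg (fun y => ⟪gradient φ y, gradient ψ y⟫ • y) x
        + divg (fun y => (c4 * ψ y) • gradient φ y) x
        + divg (fun y => (c4 * φ y) • gradient ψ y) x
        + divg (fun y => (c5 * (φ y * ψ y)) • y) x
        + divg (fun y => (-(c6 * (⟪y, y⟫ * ψ y))) • gradient φ y) x
        + divg (fun y => (c6 * (⟪y, y⟫ * φ y)) • gradient ψ y) x := by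
      erw [divg_sub (D1.add D2) D3]; rfl
    _ = divg (fun y => ⟪y, gradient φ y⟫ • gradient ψ y) x
        + divg (fun y => ⟪y, gradient ψ y⟫ • gradient φ y) x
        - divg (fun y => ⟪gradient φ y, gradient ψ y⟫ • y) x
        + divg (fun y => (c4 * ψ y) • gradient φ y) x
        + divg (fun y => (c4 * φ y) • gradient ψ y) x
        + divg (fun y => (c5 * (φ y * ψ y)) • y) x
        + divg (fun y => (-(c6 * (⟪y, y⟫ * ψ y))) • gradient φ y) x
        + divg (fun y => (c6 * (⟪y, y⟫ * φ y)) • gradient ψ y) x := by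
      rw [divg_add D1 D2]
    _ = _ := by
      rw [ht1, ht2, ht3, ht4, ht5, ht6, ht7, ht8,
        hsymφ (gradient ψ x) x, hsymψ (gradient φ x) x,
        real_inner_comm (gradient ψ x) (gradient φ x),
        real_inner_comm (gradient ψ x) x, real_inner_comm (gradient φ x) x]
      ring


lemma boundary_alg (x nx gφx gψx : E) (α β : ℝ)
    (hφn : gφx = α • nx) (hψn : gψx = β • nx)
    (hα : α = α * ⟪nx, nx⟫) (hβ : β = β * ⟪nx, nx⟫) :
    ⟪x, gφx⟫ * ⟪gψx, nx⟫ + ⟪x, gψx⟫ * ⟪gφx, nx⟫ - ⟪gφx, gψx⟫ * ⟪x, nx⟫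
      = ⟪x, nx⟫ * α * β := by
  subst hφn hψn
  simp only [real_inner_smul_left, real_inner_smul_right]
  linear_combination (-(β * ⟪x, nx⟫)) * hα

lemma contDiffOn_gradient (U : Set E) (hU : IsOpen U) (φ : E → ℝ)
    (hφ : ContDiffOn ℝ 2 φ U) : ContDiffOn ℝ 1 (gradient φ) U := by
  have h1 : ContDiffOn ℝ 1 (fderiv ℝ φ) U := hφ.fderiv_of_isOpen hU (m := 1) (by norm_num)
  exact ((TD d).toContinuousLinearMap.contDiff.comp_contDiffOn h1 : )

lemma contDiffOn_G (U : Set E) (hU : IsOpen U) (φ ψ : E → ℝ)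
    (hφ : ContDiffOn ℝ 2 φ U) (hψ : ContDiffOn ℝ 2 ψ U) (c4 c5 c6 : ℝ) :
    ContDiffOn ℝ 1 (fun y => ⟪y, gradient φ y⟫ • gradient ψ y
      + ⟪y, gradient ψ y⟫ • gradient φ y
      - ⟪gradient φ y, gradient ψ y⟫ • y
      + (c4 * ψ y) • gradient φ y + (c4 * φ y) • gradient ψ y + (c5 * (φ y * ψ y)) • y
      + (-(c6 * (⟪y, y⟫ * ψ y))) • gradient φ y
      + (c6 * (⟪y, y⟫ * φ y)) • gradient ψ y) U := by
  have hgφ := contDiffOn_gradient U hU φ hφ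
  have hgψ := contDiffOn_gradient U hU ψ hψ
  have hφ1 : ContDiffOn ℝ 1 φ U := hφ.of_le (by norm_num)
  have hψ1 : ContDiffOn ℝ 1 ψ U := hψ.of_le (by norm_num)
  have hid : ContDiffOn ℝ 1 (fun y : E => y) U := contDiffOn_id
  have hxx : ContDiffOn ℝ 1 (fun y : E => ⟪y, y⟫) U := hid.inner ℝ hid
  exact ((((((((hid.inner ℝ hgφ).smul hgψ).add
    ((hid.inner ℝ hgψ).smul hgφ)).sub
    ((hgφ.inner ℝ hgψ).smul hid)).add
    ((contDiffOn_const.mul hψ1).smul hgφ)).add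
    ((contDiffOn_const.mul hφ1).smul hgψ)).add
    ((contDiffOn_const.mul (hφ1.mul hψ1)).smul hid)).add
    (((contDiffOn_const.mul (hxx.mul hψ1)).neg).smul hgφ)).add
    ((contDiffOn_const.mul (hxx.mul hφ1)).smul hgψ)

end DQOB

theorem dirichlet_quasi_orthogonality_bound
    (d : ℕ) (hd : 2 ≤ d) (Ω : Set (EuclideanSpace ℝ (Fin d)))
    (hΩo : IsOpen Ω) (hΩb : Bornology.IsBounded Ω)
    (n : EuclideanSpace ℝ (Fin d) → EuclideanSpace ℝ (Fin d))
    (R : ℝ) (hR : 0 < R) (hΩR : Ω ⊆ Metric.closedBall 0 R)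
    (hGG : ∀ F : EuclideanSpace ℝ (Fin d) → EuclideanSpace ℝ (Fin d),
      (∃ U, IsOpen U ∧ closure Ω ⊆ U ∧ ContDiffOn ℝ 1 F U) →
      (∫ x in Ω, divg F x) = ∫ x in frontier Ω, ⟪F x, n x⟫ ∂(μH[(d:ℝ) - 1]))
    (φ ψ : EuclideanSpace ℝ (Fin d) → ℝ) (Eφ Eψ : ℝ)
    (hφr : ∃ U, IsOpen U ∧ closure Ω ⊆ U ∧ ContDiffOn ℝ 2 φ U) (hψr : ∃ U, IsOpen U ∧ closure Ω ⊆ U ∧ ContDiffOn ℝ 2 ψ U)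
    (hHφ : ∀ x ∈ Ω, -lap φ x = Eφ * φ x) (hHψ : ∀ x ∈ Ω, -lap ψ x = Eψ * ψ x)
    (hφnorm : (∫ x in Ω, (φ x) ^ 2) = 1)
    (hψnorm : (∫ x in Ω, (ψ x) ^ 2) = 1)
    (horth : (∫ x in Ω, φ x * ψ x) = 0)
    (hφ0 : ∀ x ∈ frontier Ω, φ x = 0)
    (hφn : ∀ x ∈ frontier Ω, gradient φ x = ⟪n x, gradient φ x⟫ • n x)
    (hψ0 : ∀ x ∈ frontier Ω, ψ x = 0)
    (hψn : ∀ x ∈ frontier Ω, gradient ψ x = ⟪n x, gradient ψ x⟫ • n x) :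
    |∫ x in frontier Ω,
        ⟪x, n x⟫ * ⟪n x, gradient φ x⟫ * ⟪n x, gradient ψ x⟫ ∂(μH[(d:ℝ) - 1])|
      ≤ R ^ 2 / 4 * (Eφ - Eψ) ^ 2 := by
  classical
  obtain ⟨Uφ, hUφo, hUφs, hφ2⟩ := hφr
  obtain ⟨Uψ, hUψo, hUψs, hψ2⟩ := hψr
  have hUo : IsOpen (Uφ ∩ Uψ) := hUφo.inter hUψo
  have hUs : closure Ω ⊆ Uφ ∩ Uψ := Set.subset_inter hUφs hUψs
  have hφU : ContDiffOn ℝ 2 φ (Uφ ∩ Uψ) := hφ2.mono Set.inter_subset_left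
  have hψU : ContDiffOn ℝ 2 ψ (Uφ ∩ Uψ) := hψ2.mono Set.inter_subset_right
  have hΩU : Ω ⊆ Uφ ∩ Uψ := subset_closure.trans hUs
  set G : EuclideanSpace ℝ (Fin d) → EuclideanSpace ℝ (Fin d) := fun y =>
    ⟪y, gradient φ y⟫ • gradient ψ y + ⟪y, gradient ψ y⟫ • gradient φ y
      - ⟪gradient φ y, gradient ψ y⟫ • y
      + ((((d:ℝ) - 2)/2) * ψ y) • gradient φ y + ((((d:ℝ) - 2)/2) * φ y) • gradient ψ y
      + (((Eφ + Eψ)/2) * (φ y * ψ y)) • y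
      + (-(((Eφ - Eψ)/4) * (⟪y, y⟫ * ψ y))) • gradient φ y
      + (((Eφ - Eψ)/4) * (⟪y, y⟫ * φ y)) • gradient ψ y with hGdef
  have key : (∫ x in Ω, divg G x) = ∫ x in frontier Ω, ⟪G x, n x⟫ ∂(μH[(d:ℝ) - 1]) :=
    hGG G ⟨Uφ ∩ Uψ, hUo, hUs,
      DQOB.contDiffOn_G (Uφ ∩ Uψ) hUo φ ψ hφU hψU (((d:ℝ) - 2)/2) ((Eφ + Eψ)/2) ((Eφ - Eψ)/4)⟩
  -- pointwise divergence on Ω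
  have hlapφ : ∀ x ∈ Ω, lap φ x = -(Eφ * φ x) := fun x hx => by linarith [hHφ x hx]
  have hlapψ : ∀ x ∈ Ω, lap ψ x = -(Eψ * ψ x) := fun x hx => by linarith [hHψ x hx]
  have hdiv : ∀ x ∈ Ω, divg G x
      = (Eφ + Eψ) * (φ x * ψ x) + (Eφ - Eψ)^2/4 * (⟪x, x⟫ * (φ x * ψ x)) := by
    intro x hx
    rw [hGdef]
    rw [DQOB.divG_eq (Uφ ∩ Uψ) hUo φ ψ hφU hψU (((d:ℝ) - 2)/2) ((Eφ + Eψ)/2) ((Eφ - Eψ)/4)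
      x (hΩU hx)]
    rw [hlapφ x hx, hlapψ x hx]
    ring
  -- boundary pointwise
  have hbdy : ∀ x ∈ frontier Ω, ⟪G x, n x⟫
      = ⟪x, n x⟫ * ⟪n x, gradient φ x⟫ * ⟪n x, gradient ψ x⟫ := by
    intro x hx
    have hp := hφ0 x hx
    have hq := hψ0 x hx
    have hα : ⟪n x, gradient φ x⟫ = ⟪n x, gradient φ x⟫ * ⟪n x, n x⟫ := by
      conv_lhs => rw [hφn x hx]
      rw [real_inner_smul_right]
    have hβ : ⟪n x, gradient ψ x⟫ = ⟪n x, gradient ψ x⟫ * ⟪n x, n x⟫ := by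
      conv_lhs => rw [hψn x hx]
      rw [real_inner_smul_right]
    have halg := DQOB.boundary_alg x (n x) (gradient φ x) (gradient ψ x) _ _
      (hφn x hx) (hψn x hx) hα hβ
    rw [hGdef]
    simp only [inner_add_left, inner_sub_left, real_inner_smul_left, hp, hq, mul_zero,
      zero_mul, add_zero, neg_zero]
    linear_combination halg
  -- integrability
  have hmeasΩ : MeasurableSet Ω := hΩo.measurableSet
  have hK : IsCompact (closure Ω) :=
    Metric.isCompact_of_isClosed_isBounded isClosed_closure hΩb.closure
  have hφc : ContinuousOn φ (closure Ω) := (hφU.continuousOn).mono hUs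
  have hψc : ContinuousOn ψ (closure Ω) := (hψU.continuousOn).mono hUs
  have hw1 : IntegrableOn (fun x => φ x * ψ x) Ω volume :=
    ((hφc.mul hψc).integrableOn_compact hK).mono_set subset_closure
  have hw2 : IntegrableOn (fun x => ⟪x, x⟫ * (φ x * ψ x)) Ω volume :=
    (((continuous_id.inner continuous_id).continuousOn.mul
      (hφc.mul hψc)).integrableOn_compact hK).mono_set subset_closure
  have hφsq : IntegrableOn (fun x => φ x ^ 2) Ω volume :=
    ((hφc.pow 2).integrableOn_compact hK).mono_set subset_closure
  have hψsq : IntegrableOn (fun x => ψ x ^ 2) Ω volume :=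
    ((hψc.pow 2).integrableOn_compact hK).mono_set subset_closure
  -- compute the interior integral
  have hI1 : (∫ x in Ω, divg G x)
      = (Eφ - Eψ)^2/4 * ∫ x in Ω, ⟪x, x⟫ * (φ x * ψ x) := by
    rw [setIntegral_congr_fun hmeasΩ hdiv, integral_add (hw1.const_mul _) (hw2.const_mul _),
      integral_const_mul, integral_const_mul, horth, mul_zero, zero_add]
  have hI2 : (∫ x in frontier Ω, ⟪G x, n x⟫ ∂(μH[(d:ℝ) - 1]))
      = ∫ x in frontier Ω,
          ⟪x, n x⟫ * ⟪n x, gradient φ x⟫ * ⟪n x, gradient ψ x⟫ ∂(μH[(d:ℝ) - 1]) :=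
    setIntegral_congr_fun isClosed_frontier.measurableSet hbdy
  have hfinal : (∫ x in frontier Ω,
        ⟪x, n x⟫ * ⟪n x, gradient φ x⟫ * ⟪n x, gradient ψ x⟫ ∂(μH[(d:ℝ) - 1]))
      = (Eφ - Eψ)^2/4 * ∫ x in Ω, ⟪x, x⟫ * (φ x * ψ x) := by
    rw [← hI2, ← key, hI1]
  rw [hfinal]
  -- bound the remaining integral
  have hIb : |∫ x in Ω, ⟪x, x⟫ * (φ x * ψ x)| ≤ R ^ 2 := by
    have h1 : |∫ x in Ω, ⟪x, x⟫ * (φ x * ψ x)| ≤ ∫ x in Ω, |⟪x, x⟫ * (φ x * ψ x)| := by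
      simpa only [Real.norm_eq_abs] using
        norm_integral_le_integral_norm (μ := volume.restrict Ω)
          (fun x => (⟪x, x⟫ : ℝ) * (φ x * ψ x))
    have hpt : ∀ x ∈ Ω, |⟪x, x⟫ * (φ x * ψ x)|
        ≤ R ^ 2 / 2 * φ x ^ 2 + R ^ 2 / 2 * ψ x ^ 2 := by
      intro x hx
      have hxx0 : (0:ℝ) ≤ ⟪x, x⟫ := real_inner_self_nonneg
      have hxnorm : ‖x‖ ≤ R := mem_closedBall_zero_iff.1 (hΩR hx)
      have hxxR : (⟪x, x⟫ : ℝ) ≤ R ^ 2 := by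
        rw [real_inner_self_eq_norm_sq]
        nlinarith [norm_nonneg x]
      rw [abs_mul, abs_of_nonneg hxx0]
      have habs : |φ x * ψ x| ≤ (φ x ^ 2 + ψ x ^ 2) / 2 := by
        rw [abs_mul]
        nlinarith [sq_nonneg (|φ x| - |ψ x|), sq_abs (φ x), sq_abs (ψ x)]
      nlinarith [mul_le_mul_of_nonneg_right hxxR (abs_nonneg (φ x * ψ x)),
        mul_le_mul_of_nonneg_left habs (sq_nonneg R)]
    have h2 : ∫ x in Ω, |⟪x, x⟫ * (φ x * ψ x)|
        ≤ ∫ x in Ω, (R ^ 2 / 2 * φ x ^ 2 + R ^ 2 / 2 * ψ x ^ 2) :=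
      setIntegral_mono_on hw2.abs
        ((hφsq.const_mul _).add (hψsq.const_mul _)) hmeasΩ hpt
    have h3 : ∫ x in Ω, (R ^ 2 / 2 * φ x ^ 2 + R ^ 2 / 2 * ψ x ^ 2) = R ^ 2 := by
      rw [integral_add (hφsq.const_mul _) (hψsq.const_mul _),
        integral_const_mul, integral_const_mul, hφnorm, hψnorm]
      ring
    linarith
  rw [abs_mul, abs_of_nonneg (by positivity : (0:ℝ) ≤ (Eφ - Eψ)^2/4)]
  calc (Eφ - Eψ)^2/4 * |∫ x in Ω, ⟪x, x⟫ * (φ x * ψ x)|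
      ≤ (Eφ - Eψ)^2/4 * R ^ 2 := by
        exact mul_le_mul_of_nonneg_left hIb (by positivity)
    _ = R ^ 2 / 4 * (Eφ - Eψ) ^ 2 := by ring
end
end

section
/- Let Ω, ∂Ω, σ, n be as in the context. Let u, v : ℝ^d → ℝ be C² on a neighborhood of the closure of Ω, satisfying −Δu = E_u·u and −Δv = E_v·v on Ω with E_u ≠ E_v, and both satisfying Dirichlet boundary conditions: u = v = 0 on ∂Ω with normal gradients there, i.e. ∇u(x) = ⟨n(x),∇u(x)⟩·n(x) and ∇v(x) = ⟨n(x),∇v(x)⟩·n(x) for all x ∈ ∂Ω. Then ∫_Ω ‖x‖²·u(x)·v(x) dx = (4/(E_u−E_v)²)·∫_{∂Ω} ⟨x,n(x)⟩·⟨n(x),∇u(x)⟩·⟨n(x),∇v(x)⟩ dσ(x). -/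
open MeasureTheory
open scoped RealInnerProductSpace Classical

noncomputable section

namespace DirAux

variable {d : ℕ}

local notation "E" => EuclideanSpace ℝ (Fin d)

lemma inner_grad (u : E → ℝ) (x w : E) : ⟪gradient u x, w⟫ = fderiv ℝ u x w := by
  rw [gradient, InnerProductSpace.toDual_symm_apply]

lemma sum_coord_fderiv (L : E →L[ℝ] ℝ) (w : E) :
    ∑ i, ⟪w, EuclideanSpace.single i (1:ℝ)⟫ * L (EuclideanSpace.single i (1:ℝ)) = L w := by
  have hw : ∑ i, ⟪w, EuclideanSpace.single i (1:ℝ)⟫ • EuclideanSpace.single i (1:ℝ) = w := by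
    simpa [EuclideanSpace.basisFun_apply, EuclideanSpace.basisFun_repr,
      EuclideanSpace.inner_single_right] using
      (EuclideanSpace.basisFun (Fin d) ℝ).sum_repr w
  calc ∑ i, ⟪w, EuclideanSpace.single i (1:ℝ)⟫ * L (EuclideanSpace.single i (1:ℝ))
      = L (∑ i, ⟪w, EuclideanSpace.single i (1:ℝ)⟫ • EuclideanSpace.single i (1:ℝ)) := by
        rw [map_sum]; simp
    _ = L w := by rw [hw]

lemma divg_smul (f : E → ℝ) (G : E → E) (x : E)
    (hf : DifferentiableAt ℝ f x) (hG : DifferentiableAt ℝ G x) :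
    divg (fun y => f y • G y) x = fderiv ℝ f x (G x) + f x * divg G x := by
  have hGi : ∀ i : Fin d, DifferentiableAt ℝ
      (fun y => ⟪G y, EuclideanSpace.single i (1:ℝ)⟫) x :=
    fun i => hG.inner ℝ (differentiableAt_const _)
  unfold divg
  have h1 : ∀ i : Fin d, (fun y => ⟪f y • G y, EuclideanSpace.single i (1:ℝ)⟫)
      = fun y => f y * ⟪G y, EuclideanSpace.single i (1:ℝ)⟫ := by
    intro i; funext y; rw [real_inner_smul_left]
  simp only [h1]
  have h2 : ∀ i : Fin d,
      fderiv ℝ (fun y => f y * ⟪G y, EuclideanSpace.single i (1:ℝ)⟫) x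
        (EuclideanSpace.single i (1:ℝ))
      = f x * fderiv ℝ (fun y => ⟪G y, EuclideanSpace.single i (1:ℝ)⟫) x
          (EuclideanSpace.single i (1:ℝ))
        + ⟪G x, EuclideanSpace.single i (1:ℝ)⟫ * fderiv ℝ f x (EuclideanSpace.single i (1:ℝ)) := by
    intro i
    rw [fderiv_fun_mul hf (hGi i)]
    simp [smul_eq_mul]
  simp only [h2, Finset.sum_add_distrib, ← Finset.mul_sum]
  rw [sum_coord_fderiv (fderiv ℝ f x) (G x)]
  ring

lemma divg_add (F G : E → E) (x : E)
    (hF : DifferentiableAt ℝ F x) (hG : DifferentiableAt ℝ G x) :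
    divg (fun y => F y + G y) x = divg F x + divg G x := by
  unfold divg
  rw [← Finset.sum_add_distrib]
  refine Finset.sum_congr rfl fun i _ => ?_
  have h1 : (fun y => ⟪F y + G y, EuclideanSpace.single i (1:ℝ)⟫)
      = fun y => ⟪F y, EuclideanSpace.single i (1:ℝ)⟫ + ⟪G y, EuclideanSpace.single i (1:ℝ)⟫ := by
    funext y; rw [inner_add_left]
  rw [h1, fderiv_fun_add (hF.inner ℝ (differentiableAt_const _)) (hG.inner ℝ (differentiableAt_const _))]
  simp

lemma divg_gradient (u : E → ℝ) : divg (fun y => gradient u y) = lap u := by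
  funext x
  unfold divg lap
  refine Finset.sum_congr rfl fun i _ => ?_
  have : (fun y => ⟪gradient u y, EuclideanSpace.single i (1:ℝ)⟫)
      = fun y => fderiv ℝ u y (EuclideanSpace.single i (1:ℝ)) := by
    funext y; rw [inner_grad]
  rw [this]

lemma divg_id (x : E) : divg (fun y : E => y) x = d := by
  unfold divg
  have h : ∀ i : Fin d, (fun y : E => ⟪y, EuclideanSpace.single i (1:ℝ)⟫)
      = fun y => (innerSL ℝ (EuclideanSpace.single i (1:ℝ))) y := by
    intro i; funext y; rw [real_inner_comm]; rfl
  have this2 : ∀ i : Fin d, fderiv ℝ (fun y : E => ⟪y, EuclideanSpace.single i (1:ℝ)⟫) x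
      (EuclideanSpace.single i (1:ℝ)) = 1 := by
    intro i
    rw [h i, ContinuousLinearMap.fderiv]
    simp [innerSL_apply_apply, EuclideanSpace.inner_single_right, EuclideanSpace.single_apply]
  simp only [this2, Finset.sum_const, Finset.card_univ, Fintype.card_fin, nsmul_eq_mul, mul_one]

lemma contDiffOn_gradient {u : E → ℝ} {U : Set E} (hU : IsOpen U) (hu : ContDiffOn ℝ 2 u U) :
    ContDiffOn ℝ 1 (fun y => gradient u y) U := by
  have h1 : ContDiffOn ℝ 1 (fderiv ℝ u) U := hu.fderiv_of_isOpen hU (by norm_num)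
  have h2 : (fun y => gradient u y)
      = (InnerProductSpace.toDual ℝ E).symm ∘ (fderiv ℝ u) := rfl
  rw [h2]
  exact ((InnerProductSpace.toDual ℝ E).symm.toContinuousLinearEquiv.toContinuousLinearMap.contDiff).comp_contDiffOn h1

lemma hess_symm {u : E → ℝ} {U : Set E} (hU : IsOpen U) (hu : ContDiffOn ℝ 2 u U)
    {x : E} (hx : x ∈ U) (a b : E) :
    ⟪fderiv ℝ (fun y => gradient u y) x a, b⟫ = ⟪fderiv ℝ (fun y => gradient u y) x b, a⟫ := by
  have hfd : ContDiffOn ℝ 1 (fderiv ℝ u) U := hu.fderiv_of_isOpen hU (by norm_num)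
  have hdd : DifferentiableAt ℝ (fderiv ℝ u) x :=
    (hfd.contDiffAt (hU.mem_nhds hx)).differentiableAt one_ne_zero
  have hsymm : ∀ p q : E, fderiv ℝ (fderiv ℝ u) x p q = fderiv ℝ (fderiv ℝ u) x q p := by
    intro p q
    apply second_derivative_symmetric_of_eventually (f := u) (f' := fderiv ℝ u)
    · filter_upwards [hU.mem_nhds hx] with y hy
      exact ((hu.contDiffAt (hU.mem_nhds hy)).differentiableAt (by norm_num)).hasFDerivAt
    · exact hdd.hasFDerivAt
  have key : ∀ p : E, fderiv ℝ (fun y => gradient u y) x p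
      = (InnerProductSpace.toDual ℝ E).symm (fderiv ℝ (fderiv ℝ u) x p) := by
    intro p
    have h2 : (fun y => gradient u y)
        = (InnerProductSpace.toDual ℝ E).symm ∘ (fderiv ℝ u) := rfl
    rw [h2, LinearIsometryEquiv.comp_fderiv]
    rfl
  rw [key a, key b, InnerProductSpace.toDual_symm_apply, InnerProductSpace.toDual_symm_apply]
  exact hsymm a b

end DirAux

open DirAux

set_option maxHeartbeats 1000000

theorem dirichlet_r_squared_identity
    (d : ℕ) (hd : 2 ≤ d) (Ω : Set (EuclideanSpace ℝ (Fin d)))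
    (hΩo : IsOpen Ω) (hΩb : Bornology.IsBounded Ω)
    (n : EuclideanSpace ℝ (Fin d) → EuclideanSpace ℝ (Fin d))
    (hGG : ∀ F : EuclideanSpace ℝ (Fin d) → EuclideanSpace ℝ (Fin d),
      (∃ U, IsOpen U ∧ closure Ω ⊆ U ∧ ContDiffOn ℝ 1 F U) →
      (∫ x in Ω, divg F x) = ∫ x in frontier Ω, ⟪F x, n x⟫ ∂(μH[(d:ℝ) - 1]))
    (u v : EuclideanSpace ℝ (Fin d) → ℝ) (Eu Ev : ℝ) (hne : Eu ≠ Ev)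
    (hur : ∃ U, IsOpen U ∧ closure Ω ⊆ U ∧ ContDiffOn ℝ 2 u U) (hvr : ∃ U, IsOpen U ∧ closure Ω ⊆ U ∧ ContDiffOn ℝ 2 v U)
    (hHu : ∀ x ∈ Ω, -lap u x = Eu * u x) (hHv : ∀ x ∈ Ω, -lap v x = Ev * v x)
    (hu0 : ∀ x ∈ frontier Ω, u x = 0)
    (hun : ∀ x ∈ frontier Ω, gradient u x = ⟪n x, gradient u x⟫ • n x)
    (hv0 : ∀ x ∈ frontier Ω, v x = 0)
    (hvn : ∀ x ∈ frontier Ω, gradient v x = ⟪n x, gradient v x⟫ • n x) :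
    (∫ x in Ω, ‖x‖ ^ 2 * u x * v x)
      = 4 / (Eu - Ev) ^ 2 *
        ∫ x in frontier Ω,
          ⟪x, n x⟫ * ⟪n x, gradient u x⟫ * ⟪n x, gradient v x⟫ ∂(μH[(d:ℝ) - 1]) := by
  obtain ⟨Uu, hUuo, hUus, hu2'⟩ := hur
  obtain ⟨Uv, hUvo, hUvs, hv2'⟩ := hvr
  set U : Set (EuclideanSpace ℝ (Fin d)) := Uu ∩ Uv with hUdef
  have hUo : IsOpen U := hUuo.inter hUvo
  have hUs : closure Ω ⊆ U := Set.subset_inter hUus hUvs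
  have hu2 : ContDiffOn ℝ 2 u U := hu2'.mono Set.inter_subset_left
  have hv2 : ContDiffOn ℝ 2 v U := hv2'.mono Set.inter_subset_right
  have hΩU : Ω ⊆ U := subset_closure.trans hUs
  have hfU : frontier Ω ⊆ U := frontier_subset_closure.trans hUs
  -- regularity
  have hu1 : ContDiffOn ℝ 1 u U := hu2.of_le (by norm_num)
  have hv1 : ContDiffOn ℝ 1 v U := hv2.of_le (by norm_num)
  have hgu : ContDiffOn ℝ 1 (fun y => gradient u y) U := contDiffOn_gradient hUo hu2
  have hgv : ContDiffOn ℝ 1 (fun y => gradient v y) U := contDiffOn_gradient hUo hv2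
  have du : ∀ x ∈ U, DifferentiableAt ℝ u x :=
    fun x hx => (hu1.contDiffAt (hUo.mem_nhds hx)).differentiableAt one_ne_zero
  have dv : ∀ x ∈ U, DifferentiableAt ℝ v x :=
    fun x hx => (hv1.contDiffAt (hUo.mem_nhds hx)).differentiableAt one_ne_zero
  have dgu : ∀ x ∈ U, DifferentiableAt ℝ (fun y => gradient u y) x :=
    fun x hx => (hgu.contDiffAt (hUo.mem_nhds hx)).differentiableAt one_ne_zero
  have dgv : ∀ x ∈ U, DifferentiableAt ℝ (fun y => gradient v y) x :=
    fun x hx => (hgv.contDiffAt (hUo.mem_nhds hx)).differentiableAt one_ne_zero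
  -- eigen equations, rearranged
  have lapu : ∀ x ∈ Ω, lap u x = -(Eu * u x) := fun x hx => by linarith [hHu x hx]
  have lapv : ∀ x ∈ Ω, lap v x = -(Ev * v x) := fun x hx => by linarith [hHv x hx]
  -- Green's theorem specialized to our neighborhood
  have green : ∀ F : EuclideanSpace ℝ (Fin d) → EuclideanSpace ℝ (Fin d),
      ContDiffOn ℝ 1 F U →
      (∫ x in Ω, divg F x) = ∫ x in frontier Ω, ⟪F x, n x⟫ ∂(μH[(d:ℝ) - 1]) :=
    fun F hF => hGG F ⟨U, hUo, hUs, hF⟩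
  -- integrability helper
  have key_int : ∀ g : EuclideanSpace ℝ (Fin d) → ℝ, ContinuousOn g U → IntegrableOn g Ω := by
    intro g hg
    have h1 : IntegrableOn g (closure Ω) :=
      (hg.mono hUs).integrableOn_compact hΩb.isCompact_closure
    exact h1.mono_set subset_closure
  have int1 : IntegrableOn (fun x => u x * v x) Ω :=
    key_int _ (hu1.continuousOn.mul hv1.continuousOn)
  have int2 : IntegrableOn (fun x : EuclideanSpace ℝ (Fin d) => ⟪x, x⟫ * (u x * v x)) Ω :=
    key_int _ ((continuousOn_id.inner continuousOn_id).mul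
      (hu1.continuousOn.mul hv1.continuousOn))
  have int3 : IntegrableOn (fun x => ⟪gradient u x, gradient v x⟫) Ω :=
    key_int _ (hgu.continuousOn.inner hgv.continuousOn)
  have int4 : IntegrableOn (fun x => v x * ⟪x, gradient u x⟫) Ω :=
    key_int _ (hv1.continuousOn.mul (continuousOn_id.inner hgu.continuousOn))
  have int5 : IntegrableOn (fun x => u x * ⟪x, gradient v x⟫) Ω :=
    key_int _ (hu1.continuousOn.mul (continuousOn_id.inner hgv.continuousOn))
  -- divergence of F1 = v ∇u - u ∇v
  have dF1 : ∀ x ∈ U, DifferentiableAt ℝ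
      (fun y => v y • gradient u y + (-u y) • gradient v y) x :=
    fun x hx => ((dv x hx).smul (dgu x hx)).add (((du x hx).neg).smul (dgv x hx))
  have divF1 : ∀ x ∈ Ω, divg (fun y => v y • gradient u y + (-u y) • gradient v y) x
      = (Ev - Eu) * (u x * v x) := by
    intro x hx
    have hxU := hΩU hx
    have h : divg (fun y => v y • gradient u y + (-u y) • gradient v y) x
        = divg (fun y => v y • gradient u y) x + divg (fun y => (-u y) • gradient v y) x :=
      divg_add _ _ x ((dv x hxU).smul (dgu x hxU)) (((du x hxU).neg).smul (dgv x hxU))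
    have h2 : divg (fun y => v y • gradient u y) x
        = fderiv ℝ v x (gradient u x) + v x * divg (fun y => gradient u y) x :=
      divg_smul _ _ x (dv x hxU) (dgu x hxU)
    have h3 : divg (fun y => (-u y) • gradient v y) x
        = fderiv ℝ (fun y => -u y) x (gradient v x) + (-u x) * divg (fun y => gradient v y) x :=
      divg_smul _ _ x ((du x hxU).neg) (dgv x hxU)
    rw [h, h2, h3, divg_gradient, divg_gradient, fderiv_fun_neg]
    simp only [ContinuousLinearMap.neg_apply]
    rw [← inner_grad v x (gradient u x), ← inner_grad u x (gradient v x),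
      lapu x hx, lapv x hx, real_inner_comm (gradient v x) (gradient u x)]
    ring
  -- Identity 1 : orthogonality
  have bF1 : Set.EqOn (fun x => ⟪v x • gradient u x + (-u x) • gradient v x, n x⟫)
      (fun _ => (0:ℝ)) (frontier Ω) := by
    intro x hx
    show ⟪v x • gradient u x + (-u x) • gradient v x, n x⟫ = 0
    rw [hu0 x hx, hv0 x hx]; simp
  have p1 : (∫ x in Ω, u x * v x) = 0 := by
    have hgreen := green (fun y => v y • gradient u y + (-u y) • gradient v y) ((hv1.smul hgu).add ((hu1.neg).smul hgv))
    rw [setIntegral_congr_fun hΩo.measurableSet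
        (fun x hx => divF1 x hx :
          Set.EqOn (fun x => divg (fun y => v y • gradient u y + (-u y) • gradient v y) x)
            (fun x => (Ev - Eu) * (u x * v x)) Ω),
      setIntegral_congr_fun isClosed_frontier.measurableSet bF1] at hgreen
    rw [integral_const_mul, integral_zero] at hgreen
    rcases mul_eq_zero.mp hgreen with h | h
    · exact absurd (by linarith : Eu = Ev) hne
    · exact h
  -- Identity 2 : ∫ ⟪∇u, ∇v⟫ = 0
  have p3 : (∫ x in Ω, ⟪gradient u x, gradient v x⟫) = 0 := by
    have divF4 : ∀ x ∈ Ω, divg (fun y => v y • gradient u y) x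
        = ⟪gradient u x, gradient v x⟫ - Eu * (u x * v x) := by
      intro x hx
      have hxU := hΩU hx
      have h2 : divg (fun y => v y • gradient u y) x
          = fderiv ℝ v x (gradient u x) + v x * divg (fun y => gradient u y) x :=
        divg_smul _ _ x (dv x hxU) (dgu x hxU)
      rw [h2, divg_gradient, ← inner_grad v x (gradient u x), lapu x hx,
        real_inner_comm (gradient v x) (gradient u x)]
      ring
    have bF4 : Set.EqOn (fun x => ⟪v x • gradient u x, n x⟫)
        (fun _ => (0:ℝ)) (frontier Ω) := by
      intro x hx
      show ⟪v x • gradient u x, n x⟫ = 0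
      rw [hv0 x hx]; simp
    have hgreen := green (fun y => v y • gradient u y) (hv1.smul hgu)
    rw [setIntegral_congr_fun hΩo.measurableSet
        (fun x hx => divF4 x hx :
          Set.EqOn (fun x => divg (fun y => v y • gradient u y) x)
            (fun x => ⟪gradient u x, gradient v x⟫ - Eu * (u x * v x)) Ω),
      setIntegral_congr_fun isClosed_frontier.measurableSet bF4] at hgreen
    rw [integral_sub int3 (int1.const_mul Eu), integral_const_mul, integral_zero, p1] at hgreen
    linarith [hgreen]
  -- Identity 3 : ∫ (v ⟪x,∇u⟫ + u ⟪x,∇v⟫) = 0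
  have p45 : (∫ x in Ω, v x * ⟪x, gradient u x⟫) + (∫ x in Ω, u x * ⟪x, gradient v x⟫) = 0 := by
    have divF5 : ∀ x ∈ Ω, divg (fun y => (u y * v y) • y) x
        = v x * ⟪x, gradient u x⟫ + u x * ⟪x, gradient v x⟫ + (d : ℝ) * (u x * v x) := by
      intro x hx
      have hxU := hΩU hx
      have h2 : divg (fun y => (u y * v y) • y) x
          = fderiv ℝ (fun y => u y * v y) x x + (u x * v x) * divg (fun y => y) x :=
        divg_smul _ _ x ((du x hxU).mul (dv x hxU)) differentiableAt_fun_id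
      rw [h2, divg_id, fderiv_fun_mul (du x hxU) (dv x hxU)]
      simp only [ContinuousLinearMap.add_apply, ContinuousLinearMap.coe_smul',
        Pi.smul_apply, smul_eq_mul]
      rw [← inner_grad u x x, ← inner_grad v x x,
        real_inner_comm (gradient u x) x, real_inner_comm (gradient v x) x]
      ring
    have bF5 : Set.EqOn (fun x => ⟪(u x * v x) • x, n x⟫)
        (fun _ => (0:ℝ)) (frontier Ω) := by
      intro x hx
      show ⟪(u x * v x) • x, n x⟫ = 0
      rw [hu0 x hx]; simp
    have hgreen := green (fun y => (u y * v y) • y) ((hu1.mul hv1).smul contDiffOn_id)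
    rw [setIntegral_congr_fun hΩo.measurableSet
        (fun x hx => divF5 x hx :
          Set.EqOn (fun x => divg (fun y => (u y * v y) • y) x)
            (fun x => v x * ⟪x, gradient u x⟫ + u x * ⟪x, gradient v x⟫
              + (d : ℝ) * (u x * v x)) Ω),
      setIntegral_congr_fun isClosed_frontier.measurableSet bF5] at hgreen
    have int45 : IntegrableOn
        (fun x => v x * ⟪x, gradient u x⟫ + u x * ⟪x, gradient v x⟫) Ω := int4.add int5
    rw [integral_add int45 (int1.const_mul (d : ℝ)), integral_add int4 int5,
      integral_const_mul, integral_zero, p1] at hgreen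
    linarith [hgreen]
  -- Identity 4 : Rellich identity
  have cdid : ContDiffOn ℝ 1 (fun y : EuclideanSpace ℝ (Fin d) => y) U := contDiffOn_id
  have q5 : -Ev * (∫ x in Ω, v x * ⟪x, gradient u x⟫)
      - Eu * (∫ x in Ω, u x * ⟪x, gradient v x⟫)
      = ∫ x in frontier Ω,
          ⟪x, n x⟫ * ⟪n x, gradient u x⟫ * ⟪n x, gradient v x⟫ ∂(μH[(d:ℝ) - 1]) := by
    have divF3 : ∀ x ∈ Ω, divg (fun y => ⟪y, gradient u y⟫ • gradient v y
        + (⟪y, gradient v y⟫ • gradient u y + (-⟪gradient u y, gradient v y⟫) • y)) x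
        = (2 - (d : ℝ)) * ⟪gradient u x, gradient v x⟫
          - Ev * (v x * ⟪x, gradient u x⟫) - Eu * (u x * ⟪x, gradient v x⟫) := by
      intro x hx
      have hxU := hΩU hx
      have dguf : DifferentiableAt ℝ (fun y => ⟪y, gradient u y⟫) x :=
        differentiableAt_fun_id.inner ℝ (dgu x hxU)
      have dgvf : DifferentiableAt ℝ (fun y => ⟪y, gradient v y⟫) x :=
        differentiableAt_fun_id.inner ℝ (dgv x hxU)
      have dguv : DifferentiableAt ℝ (fun y => ⟪gradient u y, gradient v y⟫) x :=
        (dgu x hxU).inner ℝ (dgv x hxU)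
      have h0 : divg (fun y => ⟪y, gradient u y⟫ • gradient v y
          + (⟪y, gradient v y⟫ • gradient u y + (-⟪gradient u y, gradient v y⟫) • y)) x
          = divg (fun y => ⟪y, gradient u y⟫ • gradient v y) x
            + divg (fun y => ⟪y, gradient v y⟫ • gradient u y
                + (-⟪gradient u y, gradient v y⟫) • y) x :=
        divg_add _ _ x (dguf.smul (dgv x hxU))
          ((dgvf.smul (dgu x hxU)).add (dguv.neg.smul differentiableAt_fun_id))
      have h1 : divg (fun y => ⟪y, gradient v y⟫ • gradient u y
          + (-⟪gradient u y, gradient v y⟫) • y) x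
          = divg (fun y => ⟪y, gradient v y⟫ • gradient u y) x
            + divg (fun y => (-⟪gradient u y, gradient v y⟫) • y) x :=
        divg_add _ _ x (dgvf.smul (dgu x hxU)) (dguv.neg.smul differentiableAt_fun_id)
      have hA : divg (fun y => ⟪y, gradient u y⟫ • gradient v y) x
          = fderiv ℝ (fun y => ⟪y, gradient u y⟫) x (gradient v x)
            + ⟪x, gradient u x⟫ * divg (fun y => gradient v y) x :=
        divg_smul _ _ x dguf (dgv x hxU)
      have hB : divg (fun y => ⟪y, gradient v y⟫ • gradient u y) x
          = fderiv ℝ (fun y => ⟪y, gradient v y⟫) x (gradient u x)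
            + ⟪x, gradient v x⟫ * divg (fun y => gradient u y) x :=
        divg_smul _ _ x dgvf (dgu x hxU)
      have hC : divg (fun y => (-⟪gradient u y, gradient v y⟫) • y) x
          = fderiv ℝ (fun y => -⟪gradient u y, gradient v y⟫) x x
            + (-⟪gradient u x, gradient v x⟫)
              * divg (fun y : EuclideanSpace ℝ (Fin d) => y) x :=
        divg_smul _ _ x dguv.neg differentiableAt_fun_id
      have hfA : fderiv ℝ (fun y => ⟪y, gradient u y⟫) x (gradient v x)
          = ⟪x, fderiv ℝ (fun y => gradient u y) x (gradient v x)⟫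
            + ⟪gradient v x, gradient u x⟫ := by
        rw [fderiv_inner_apply (𝕜 := ℝ) differentiableAt_fun_id (dgu x hxU) (gradient v x)]
        simp [fderiv_id']
      have hfB : fderiv ℝ (fun y => ⟪y, gradient v y⟫) x (gradient u x)
          = ⟪x, fderiv ℝ (fun y => gradient v y) x (gradient u x)⟫
            + ⟪gradient u x, gradient v x⟫ := by
        rw [fderiv_inner_apply (𝕜 := ℝ) differentiableAt_fun_id (dgv x hxU) (gradient u x)]
        simp [fderiv_id']
      have hfC : fderiv ℝ (fun y => -⟪gradient u y, gradient v y⟫) x x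
          = -(⟪gradient u x, fderiv ℝ (fun y => gradient v y) x x⟫
              + ⟪fderiv ℝ (fun y => gradient u y) x x, gradient v x⟫) := by
        rw [fderiv_fun_neg, ContinuousLinearMap.neg_apply,
          fderiv_inner_apply (𝕜 := ℝ) (dgu x hxU) (dgv x hxU) x]
      have hs1 : ⟪x, fderiv ℝ (fun y => gradient u y) x (gradient v x)⟫
          = ⟪fderiv ℝ (fun y => gradient u y) x x, gradient v x⟫ := by
        rw [real_inner_comm]
        exact hess_symm hUo hu2 hxU (gradient v x) x
      have hs2 : ⟪x, fderiv ℝ (fun y => gradient v y) x (gradient u x)⟫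
          = ⟪gradient u x, fderiv ℝ (fun y => gradient v y) x x⟫ := by
        rw [real_inner_comm, hess_symm hUo hv2 hxU (gradient u x) x, real_inner_comm]
      rw [h0, h1, hA, hB, hC, divg_gradient, divg_gradient, divg_id, hfA, hfB, hfC,
        lapu x hx, lapv x hx, hs1, hs2, real_inner_comm (gradient v x) (gradient u x)]
      ring
    have bF3 : Set.EqOn (fun x => ⟪⟪x, gradient u x⟫ • gradient v x
        + (⟪x, gradient v x⟫ • gradient u x + (-⟪gradient u x, gradient v x⟫) • x), n x⟫)
        (fun x => ⟪x, n x⟫ * ⟪n x, gradient u x⟫ * ⟪n x, gradient v x⟫) (frontier Ω) := by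
      intro x hx
      show ⟪⟪x, gradient u x⟫ • gradient v x
          + (⟪x, gradient v x⟫ • gradient u x + (-⟪gradient u x, gradient v x⟫) • x), n x⟫
        = ⟪x, n x⟫ * ⟪n x, gradient u x⟫ * ⟪n x, gradient v x⟫
      have ha : ⟪n x, gradient u x⟫ = ⟪n x, gradient u x⟫ * ⟪n x, n x⟫ := by
        conv_lhs => rw [hun x hx, real_inner_smul_right]
      simp only [inner_add_left, real_inner_smul_left]
      rw [hun x hx, hvn x hx]
      simp only [real_inner_smul_left, real_inner_smul_right]
      linear_combination (⟪n x, gradient v x⟫ * ⟪n x, n x⟫ * ⟪x, n x⟫) * ha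
    have hgreen := green (fun y => ⟪y, gradient u y⟫ • gradient v y
        + (⟪y, gradient v y⟫ • gradient u y + (-⟪gradient u y, gradient v y⟫) • y))
      (((contDiffOn_id.inner ℝ hgu).smul hgv).add
        (((contDiffOn_id.inner ℝ hgv).smul hgu).add (((hgu.inner ℝ hgv).neg).smul cdid)))
    rw [setIntegral_congr_fun hΩo.measurableSet
        (fun x hx => divF3 x hx :
          Set.EqOn (fun x => divg (fun y => ⟪y, gradient u y⟫ • gradient v y
              + (⟪y, gradient v y⟫ • gradient u y + (-⟪gradient u y, gradient v y⟫) • y)) x)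
            (fun x => (2 - (d : ℝ)) * ⟪gradient u x, gradient v x⟫
              - Ev * (v x * ⟪x, gradient u x⟫) - Eu * (u x * ⟪x, gradient v x⟫)) Ω),
      setIntegral_congr_fun isClosed_frontier.measurableSet bF3] at hgreen
    have intA : IntegrableOn (fun x => (2 - (d : ℝ)) * ⟪gradient u x, gradient v x⟫
        - Ev * (v x * ⟪x, gradient u x⟫)) Ω :=
      (int3.const_mul _).sub (int4.const_mul _)
    rw [integral_sub intA (int5.const_mul Eu),
      integral_sub (int3.const_mul _) (int4.const_mul _),
      integral_const_mul, integral_const_mul, integral_const_mul, p3] at hgreen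
    linear_combination hgreen
  -- Identity 5 : with weight |x|^2
  have q2 : 2 * (∫ x in Ω, v x * ⟪x, gradient u x⟫)
      - 2 * (∫ x in Ω, u x * ⟪x, gradient v x⟫)
      + (Ev - Eu) * (∫ x in Ω, ⟪x, x⟫ * (u x * v x)) = 0 := by
    have divF2 : ∀ x ∈ Ω, divg (fun y => ⟪y, y⟫
        • (v y • gradient u y + (-u y) • gradient v y)) x
        = 2 * (v x * ⟪x, gradient u x⟫) - 2 * (u x * ⟪x, gradient v x⟫)
          + (Ev - Eu) * (⟪x, x⟫ * (u x * v x)) := by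
      intro x hx
      have hxU := hΩU hx
      have h2 : divg (fun y => ⟪y, y⟫ • (v y • gradient u y + (-u y) • gradient v y)) x
          = fderiv ℝ (fun y => ⟪y, y⟫) x (v x • gradient u x + (-u x) • gradient v x)
            + ⟪x, x⟫ * divg (fun y => v y • gradient u y + (-u y) • gradient v y) x :=
        divg_smul _ _ x (differentiableAt_fun_id.inner ℝ differentiableAt_fun_id) (dF1 x hxU)
      have hf2 : fderiv ℝ (fun y : EuclideanSpace ℝ (Fin d) => ⟪y, y⟫) x
          (v x • gradient u x + (-u x) • gradient v x)
          = 2 * ⟪x, v x • gradient u x + (-u x) • gradient v x⟫ := by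
        rw [fderiv_inner_apply (𝕜 := ℝ) differentiableAt_fun_id differentiableAt_fun_id _]
        simp only [fderiv_id', ContinuousLinearMap.coe_id', id_eq]
        rw [real_inner_comm (v x • gradient u x + (-u x) • gradient v x) x]
        ring
      rw [h2, hf2, divF1 x hx, inner_add_right, real_inner_smul_right, real_inner_smul_right]
      ring
    have bF2 : Set.EqOn (fun x => ⟪⟪x, x⟫ • (v x • gradient u x + (-u x) • gradient v x), n x⟫)
        (fun _ => (0:ℝ)) (frontier Ω) := by
      intro x hx
      show ⟪⟪x, x⟫ • (v x • gradient u x + (-u x) • gradient v x), n x⟫ = 0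
      rw [hu0 x hx, hv0 x hx]; simp
    have hgreen := green (fun y => ⟪y, y⟫ • (v y • gradient u y + (-u y) • gradient v y))
      ((contDiffOn_id.inner ℝ contDiffOn_id).smul ((hv1.smul hgu).add ((hu1.neg).smul hgv)))
    rw [setIntegral_congr_fun hΩo.measurableSet
        (fun x hx => divF2 x hx :
          Set.EqOn (fun x => divg (fun y => ⟪y, y⟫
              • (v y • gradient u y + (-u y) • gradient v y)) x)
            (fun x => 2 * (v x * ⟪x, gradient u x⟫) - 2 * (u x * ⟪x, gradient v x⟫)
              + (Ev - Eu) * (⟪x, x⟫ * (u x * v x))) Ω),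
      setIntegral_congr_fun isClosed_frontier.measurableSet bF2] at hgreen
    have intB : IntegrableOn (fun x => 2 * (v x * ⟪x, gradient u x⟫)
        - 2 * (u x * ⟪x, gradient v x⟫)) Ω :=
      (int4.const_mul _).sub (int5.const_mul _)
    rw [integral_add intB (int2.const_mul (Ev - Eu)),
      integral_sub (int4.const_mul _) (int5.const_mul _),
      integral_const_mul, integral_const_mul, integral_const_mul, integral_zero] at hgreen
    linear_combination hgreen
  -- final algebra
  have hEuEv : Eu - Ev ≠ 0 := sub_ne_zero.mpr hne
  have hL : (fun x : EuclideanSpace ℝ (Fin d) => ‖x‖ ^ 2 * u x * v x)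
      = fun x => ⟪x, x⟫ * (u x * v x) := by
    funext x
    rw [real_inner_self_eq_norm_sq]
    ring
  rw [show (∫ x in Ω, ‖x‖ ^ 2 * u x * v x) = ∫ x in Ω, ⟪x, x⟫ * (u x * v x) from by rw [hL],
    div_mul_eq_mul_div, eq_div_iff (pow_ne_zero 2 hEuEv)]
  linear_combination (-(Eu - Ev)) * q2 + 4 * q5 + (2 * Eu + 2 * Ev) * p45
end
end
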